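/- For all integers $m, n \ge 1$ and $k \ge 0$, the number of tuples $(x_1,\ldots,x_{m+n}) \in \mathbb{Z}_{\ge 0}^{m+n}$ with $\sum_{j=1}^m x_j = k$ and $\sum_{j=1}^n x_{m+j} = k$ equals $\binom{k+m-1}{m-1}\binom{k+n-1}{n-1}$, which also equals $\sum_{i=0}^{\min\{m,n\}} \binom{m-1}{i}\binom{n-1}{i}\binom{k+m+n-2-i}{m+n-2}$. -/

import Mathlib

open Finset


lemma choose_swap (b i q : ℕ) : b.choose i * (b - i).choose q = b.choose q * (b - q).choose i := by
  rcases le_or_gt (i + q) b with h | h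
  · have h1 := Nat.choose_mul (n := b) (Nat.le_add_right i q)
    have h2 := Nat.choose_mul (n := b) (Nat.le_add_left q i)
    simp only [Nat.add_sub_cancel_left, Nat.add_sub_cancel] at h1 h2
    rw [← h1, Nat.choose_symm_add, h2]
  · rcases le_or_gt i b with hi | hi
    · rw [Nat.choose_eq_zero_of_lt (by omega : b - i < q)]
      rcases le_or_gt q b with hq | hq
      · rw [Nat.choose_eq_zero_of_lt (by omega : b - q < i)]; ring
      · rw [Nat.choose_eq_zero_of_lt hq]; ring
    · rw [Nat.choose_eq_zero_of_lt hi]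
      rcases le_or_gt q b with hq | hq
      · rw [Nat.choose_eq_zero_of_lt (by omega : b - q < i)]; ring
      · rw [Nat.choose_eq_zero_of_lt hq]; ring

lemma vand2 (a c N : ℕ) (hN : c < N) :
    ∑ i ∈ range N, a.choose i * c.choose i = (a + c).choose c := by
  rw [Nat.add_choose_eq, Finset.Nat.sum_antidiagonal_eq_sum_range_succ_mk]
  rw [← Finset.sum_subset (Finset.range_subset_range.2 (by omega : c + 1 ≤ N))
      (fun i _ hi => by
        rw [Nat.choose_eq_zero_of_lt (by simpa using hi : c < i), mul_zero])]
  refine Finset.sum_congr rfl fun i hi => ?_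
  rw [Nat.choose_symm (by simpa using Nat.lt_succ_iff.mp (mem_range.mp hi))]

lemma key (a b k : ℕ) :
    (k + a).choose a * (k + b).choose b =
      ∑ i ∈ range (b + 1), a.choose i * b.choose i * (k + a + b - i).choose (a + b) := by
  have step1 : ∀ i ∈ range (b + 1),
      a.choose i * b.choose i * (k + a + b - i).choose (a + b) =
      ∑ x ∈ antidiagonal (a + b),
        (k + a).choose x.1 * (b.choose x.2 * ((b - x.2).choose i * a.choose i)) := by
    intro i hi
    have hib : i ≤ b := Nat.lt_succ_iff.mp (mem_range.mp hi)
    have : k + a + b - i = (k + a) + (b - i) := by omega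
    rw [this, Nat.add_choose_eq, Finset.mul_sum]
    refine Finset.sum_congr rfl fun x hx => ?_
    have := choose_swap b i x.2
    calc a.choose i * b.choose i * ((k + a).choose x.1 * (b - i).choose x.2)
        = (k + a).choose x.1 * (b.choose i * (b - i).choose x.2 * a.choose i) := by ring
      _ = (k + a).choose x.1 * (b.choose x.2 * ((b - x.2).choose i * a.choose i)) := by
          rw [this]; ring
  rw [Finset.sum_congr rfl step1, Finset.sum_comm]
  have step2 : ∀ x ∈ antidiagonal (a + b),
      ∑ i ∈ range (b + 1),
        (k + a).choose x.1 * (b.choose x.2 * ((b - x.2).choose i * a.choose i)) =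
      (k + a).choose a * ((k).choose (x.1 - a) * b.choose x.2) := by
    intro x hx
    have hx' : x.1 + x.2 = a + b := Finset.HasAntidiagonal.mem_antidiagonal.mp hx
    rw [← Finset.mul_sum, ← Finset.mul_sum]
    have hsum : ∑ i ∈ range (b + 1), (b - x.2).choose i * a.choose i
        = (a + (b - x.2)).choose (b - x.2) := by
      rw [← vand2 a (b - x.2) (b + 1) (by omega)]
      exact Finset.sum_congr rfl fun i _ => mul_comm _ _
    rw [hsum]
    rcases le_or_gt x.2 b with hq | hq
    · have hp : a + (b - x.2) = x.1 := by omega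
      have hpa : a ≤ x.1 := by omega
      rw [hp]
      have hsymm : x.1.choose (b - x.2) = x.1.choose a := by
        have : b - x.2 = x.1 - a := by omega
        rw [this, Nat.choose_symm hpa]
      rw [hsymm]
      rcases le_or_gt x.1 (k + a) with hpk | hpk
      · have := Nat.choose_mul (n := k + a) hpa
        have h4 : k + a - a = k := by omega
        rw [h4] at this
        calc (k + a).choose x.1 * (b.choose x.2 * x.1.choose a)
            = (k + a).choose x.1 * x.1.choose a * b.choose x.2 := by ring
          _ = (k + a).choose a * (k.choose (x.1 - a) * b.choose x.2) := by rw [this]; ring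
      · rw [Nat.choose_eq_zero_of_lt hpk, Nat.choose_eq_zero_of_lt (by omega : k < x.1 - a)]
        ring
    · rw [Nat.choose_eq_zero_of_lt hq]; ring
  rw [Finset.sum_congr rfl step2, ← Finset.mul_sum]
  congr 1
  rw [Nat.add_choose_eq]
  symm
  refine Finset.sum_bij_ne_zero (fun x _ _ => (x.1 - a, x.2)) ?_ ?_ ?_ ?_
  · intro x hx hne
    have hx' : x.1 + x.2 = a + b := Finset.HasAntidiagonal.mem_antidiagonal.mp hx
    have hq : x.2 ≤ b := by
      by_contra h
      exact hne (by rw [Nat.choose_eq_zero_of_lt (by omega : b < x.2)]; ring)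
    refine Finset.HasAntidiagonal.mem_antidiagonal.mpr ?_
    show x.1 - a + x.2 = b
    omega
  · intro x1 h11 h12 x2 h21 h22 heq
    have e1 := Finset.HasAntidiagonal.mem_antidiagonal.mp h11
    have e2 := Finset.HasAntidiagonal.mem_antidiagonal.mp h21
    have hq1 : x1.2 ≤ b := by
      by_contra h
      exact h12 (by rw [Nat.choose_eq_zero_of_lt (by omega : b < x1.2)]; ring)
    have hq2 : x2.2 ≤ b := by
      by_contra h
      exact h22 (by rw [Nat.choose_eq_zero_of_lt (by omega : b < x2.2)]; ring)
    have heq' : (x1.1 - a, x1.2) = (x2.1 - a, x2.2) := heq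
    injection heq' with h1 h2
    exact Prod.ext (by omega) h2
  · intro y hy hne
    have hy' : y.1 + y.2 = b := Finset.HasAntidiagonal.mem_antidiagonal.mp hy
    refine ⟨(y.1 + a, y.2), Finset.HasAntidiagonal.mem_antidiagonal.mpr (by omega), ?_, ?_⟩
    · simpa [Nat.add_sub_cancel] using hne
    · simp [Nat.add_sub_cancel]
  · intro x hx hne
    rfl


lemma card_sum_eq (m k : ℕ) :
    Nat.card {f : Fin m → ℕ // ∑ i, f i = k} = (m + k - 1).choose k := by
  have e1 : {f : Fin m → ℕ // ∑ i, f i = k} ≃ Sym (Fin m) k := by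
    refine Equiv.subtypeEquiv
      (Finsupp.equivFunOnFinite.symm.trans Multiset.toFinsupp.symm.toEquiv) fun f => ?_
    simp only [Equiv.trans_apply, AddEquiv.toEquiv_symm, AddEquiv.coe_toEquiv]
    rw [show (Multiset.toFinsupp.symm.toEquiv (Finsupp.equivFunOnFinite.symm f) : Multiset (Fin m))
        = Finsupp.toMultiset (Finsupp.equivFunOnFinite.symm f) from rfl]
    rw [Finsupp.card_toMultiset, Finsupp.sum_fintype _ _ (fun _ => rfl)]
    simp [Finsupp.equivFunOnFinite]
    rfl
  rw [Nat.card_congr e1, Nat.card_eq_fintype_card, Sym.card_sym_eq_choose, Fintype.card_fin]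

def myE (a b : ℕ) : (Fin (a + b) → ℕ) ≃ (Fin a → ℕ) × (Fin b → ℕ) :=
  (Equiv.arrowCongr finSumFinEquiv.symm (Equiv.refl ℕ)).trans
    (Equiv.sumArrowEquivProdArrow _ _ _)

lemma myE_fst (a b : ℕ) (x : Fin (a + b) → ℕ) :
    (myE a b x).1 = fun i => x (Fin.castAdd b i) := rfl

lemma myE_snd (a b : ℕ) (x : Fin (a + b) → ℕ) :
    (myE a b x).2 = fun i => x (Fin.natAdd a i) := rfl

lemma hsplit1 (a b : ℕ) (x : Fin (a + b) → ℕ) :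
    (∑ j : Fin (a + b), if (j : ℕ) < a then x j else 0) = ∑ i : Fin a, x (Fin.castAdd b i) := by
  rw [Fin.sum_univ_add]
  simp

lemma hsplit2 (a b : ℕ) (x : Fin (a + b) → ℕ) :
    (∑ j : Fin (a + b), if a ≤ (j : ℕ) then x j else 0) = ∑ i : Fin b, x (Fin.natAdd a i) := by
  rw [Fin.sum_univ_add]
  simp

lemma part1 (a b k : ℕ) :
    Set.ncard {x : Fin (a + b) → ℕ |
        (∑ j : Fin (a + b), if (j : ℕ) < a then x j else 0) = k ∧
        (∑ j : Fin (a + b), if a ≤ (j : ℕ) then x j else 0) = k} =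
      (a + k - 1).choose k * (b + k - 1).choose k := by
  rw [← Nat.card_coe_set_eq]
  have e2 : {x : Fin (a + b) → ℕ |
      (∑ j : Fin (a + b), if (j : ℕ) < a then x j else 0) = k ∧
      (∑ j : Fin (a + b), if a ≤ (j : ℕ) then x j else 0) = k} ≃
      {p : (Fin a → ℕ) × (Fin b → ℕ) // (∑ i, p.1 i = k) ∧ (∑ i, p.2 i = k)} := by
    refine Equiv.subtypeEquiv (myE a b) fun x => ?_
    rw [Set.mem_setOf_eq, myE_fst, myE_snd, hsplit1, hsplit2]
  rw [Nat.card_congr (e2.trans (Equiv.subtypeProdEquivProd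
      (p := fun f : Fin a → ℕ => ∑ i, f i = k) (q := fun g : Fin b → ℕ => ∑ i, g i = k))),
    Nat.card_prod, card_sum_eq, card_sum_eq]

theorem stmt_7 (m n k : ℕ) (hm : 1 ≤ m) (hn : 1 ≤ n) :
    Set.ncard {x : Fin (m + n) → ℕ |
        (∑ j : Fin (m + n), if (j : ℕ) < m then x j else 0) = k ∧
        (∑ j : Fin (m + n), if m ≤ (j : ℕ) then x j else 0) = k} =
      (k + m - 1).choose (m - 1) * (k + n - 1).choose (n - 1) ∧
    (k + m - 1).choose (m - 1) * (k + n - 1).choose (n - 1) =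
      ∑ i ∈ Finset.range (min m n + 1),
        (m - 1).choose i * (n - 1).choose i * (k + m + n - 2 - i).choose (m + n - 2) := by
  obtain ⟨a, rfl⟩ : ∃ a, m = a + 1 := ⟨m - 1, by omega⟩
  obtain ⟨b, rfl⟩ : ∃ b, n = b + 1 := ⟨n - 1, by omega⟩
  have hma : a + 1 - 1 = a := by omega
  have hmb : b + 1 - 1 = b := by omega
  have hka : k + (a + 1) - 1 = k + a := by omega
  have hkb : k + (b + 1) - 1 = k + b := by omega
  have hcon : (k + (a + 1) - 1).choose (a + 1 - 1) * (k + (b + 1) - 1).choose (b + 1 - 1)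
      = (k + a).choose a * (k + b).choose b := by rw [hma, hmb, hka, hkb]
  constructor
  · rw [hcon, part1 (a + 1) (b + 1) k]
    have c1 : a + 1 + k - 1 = k + a := by omega
    have c2 : b + 1 + k - 1 = k + b := by omega
    have d1 : (k + a).choose k = (k + a).choose a := by
      rw [add_comm k a]; exact Nat.choose_symm_add.symm
    have d2 : (k + b).choose k = (k + b).choose b := by
      rw [add_comm k b]; exact Nat.choose_symm_add.symm
    rw [c1, c2, d1, d2]
  · rw [hcon, key a b k]
    have hran : ∀ i, min a b + 1 ≤ i →
        a.choose i * b.choose i * (k + a + b - i).choose (a + b) = 0 := by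
      intro i hi
      rcases le_or_gt a b with h | h
      · rw [Nat.choose_eq_zero_of_lt (by omega : a < i)]; ring
      · rw [Nat.choose_eq_zero_of_lt (by omega : b < i), mul_zero, zero_mul]
    have heq : ∀ N, min a b + 1 ≤ N →
        ∑ i ∈ range N, a.choose i * b.choose i * (k + a + b - i).choose (a + b)
        = ∑ i ∈ range (min a b + 1),
            a.choose i * b.choose i * (k + a + b - i).choose (a + b) := by
      intro N hN
      exact (Finset.sum_subset (Finset.range_subset_range.2 hN)
        (fun i _ hi => hran i (by simp only [mem_range, not_lt] at hi; omega))).symm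
    have e4 : a + 1 + (b + 1) - 2 = a + b := by omega
    have e5 : ∀ i, k + (a + 1) + (b + 1) - 2 - i = k + a + b - i := fun i => by omega
    simp only [hma, hmb, e4, e5]
    rw [heq (b + 1) (by omega), show min (a + 1) (b + 1) + 1 = min a b + 2 by omega,
      heq (min a b + 2) (by omega)]
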